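/- arXiv:1603.03683 — 2 statements merged into one kernel-verified Lean document; each statement's English description precedes it below -/
import Mathlib

section
/- Let (Ω, F, P) be a probability space, R > 1, B ≥ 1, and σ : Ω → ℕ a random variable with E[R^σ] ≤ B. Let θ > 0, M > 0 with 3θM ≤ log R, (Y_t) random variables with |Y_t| ≤ M pointwise, and Λ ∈ ℝ with |Λ| ≤ M. Then E[exp(θ ∑_{t=0}^{σ} (Y_t − Λ))] ≥ 1/(R·B). -/
open MeasureTheory Real
open scoped ENNReal

/-- Lower bound of Lemma `relvalfnbndlem`: under `E[R^σ] ≤ B`, `3θM ≤ log R`,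
`|Y_t| ≤ M`, `|Λ| ≤ M`, one has `E[exp(θ ∑_{t=0}^{σ} (Y_t − Λ))] ≥ 1/(R·B)`. -/
theorem stmt3 {Ω : Type*} [MeasurableSpace Ω] (μ : Measure Ω) [IsProbabilityMeasure μ]
    (R B : ℝ) (hR : 1 < R) (hB : 1 ≤ B)
    (σ : Ω → ℕ) (hσmeas : Measurable σ)
    (hmom : ∫⁻ ω, ENNReal.ofReal (R ^ σ ω) ∂μ ≤ ENNReal.ofReal B)
    (θ M : ℝ) (hθ : 0 < θ) (hM : 0 < M) (hsmall : 3 * θ * M ≤ Real.log R)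
    (Y : ℕ → Ω → ℝ) (hYmeas : ∀ t, Measurable (Y t)) (hY : ∀ t ω, |Y t ω| ≤ M)
    (Λ : ℝ) (hΛ : |Λ| ≤ M) :
    ENNReal.ofReal (1 / (R * B)) ≤
      ∫⁻ ω, ENNReal.ofReal
        (Real.exp (θ * ∑ t ∈ Finset.range (σ ω + 1), (Y t ω - Λ))) ∂μ := by
  have hR0 : (0:ℝ) < R := lt_trans one_pos hR
  have hB0 : (0:ℝ) < B := lt_of_lt_of_le one_pos hB
  have hRpow : ∀ ω, (0:ℝ) < R ^ σ ω := fun ω => pow_pos hR0 _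
  -- pointwise bound: exp(θ·∑) ≥ (R^(σ+1))⁻¹
  have hpt : ∀ ω, (R ^ (σ ω + 1))⁻¹ ≤
      Real.exp (θ * ∑ t ∈ Finset.range (σ ω + 1), (Y t ω - Λ)) := by
    intro ω
    have hsum : (-(2*M)) * (σ ω + 1) ≤ ∑ t ∈ Finset.range (σ ω + 1), (Y t ω - Λ) := by
      have : ∀ t ∈ Finset.range (σ ω + 1), -(2*M) ≤ Y t ω - Λ := by
        intro t _
        have h1 := abs_le.1 (hY t ω)
        have h2 := abs_le.1 hΛ
        linarith [h1.1, h2.2]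
      calc (-(2*M)) * (σ ω + 1)
          = ∑ _t ∈ Finset.range (σ ω + 1), (-(2*M)) := by
            simp [Finset.sum_const, mul_comm]
        _ ≤ _ := Finset.sum_le_sum this
    have h2θM : 2 * θ * M ≤ Real.log R := by nlinarith [hθ.le, hM.le]
    have hexp1 : Real.exp ((-(σ ω + 1 : ℝ)) * Real.log R) ≤
        Real.exp (θ * ∑ t ∈ Finset.range (σ ω + 1), (Y t ω - Λ)) := by
      apply Real.exp_le_exp.2
      have hθsum : θ * ((-(2*M)) * (σ ω + 1)) ≤
          θ * ∑ t ∈ Finset.range (σ ω + 1), (Y t ω - Λ) :=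
        mul_le_mul_of_nonneg_left hsum hθ.le
      have hnat : (0:ℝ) < (σ ω : ℝ) + 1 := by positivity
      nlinarith [hnat]
    have hexp2 : Real.exp ((-(σ ω + 1 : ℝ)) * Real.log R) = (R ^ (σ ω + 1))⁻¹ := by
      rw [neg_mul, Real.exp_neg]
      congr 1
      rw [← Real.exp_log (pow_pos hR0 (σ ω + 1)), Real.log_pow]
      push_cast
      ring_nf
    rw [← hexp2]; exact hexp1
  -- Cauchy-Schwarz: ∫ (R^σ)⁻¹ ≥ (ofReal B)⁻¹
  have hmeasRσ : Measurable fun ω => ENNReal.ofReal (R ^ σ ω) := by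
    apply ENNReal.measurable_ofReal.comp
    exact (measurable_const.pow (hσmeas.comp measurable_id)).comp measurable_id
  have hmeasRσinv : Measurable fun ω => ENNReal.ofReal ((R ^ σ ω)⁻¹) := by
    apply ENNReal.measurable_ofReal.comp
    exact ((measurable_const.pow hσmeas)).inv
  set A : ℝ≥0∞ := ∫⁻ ω, ENNReal.ofReal ((R ^ σ ω)⁻¹) ∂μ with hA
  have hCS : (ENNReal.ofReal B)⁻¹ ≤ A := by
    have hconj : Real.HolderConjugate 2 2 := Real.HolderConjugate.two_two
    have h := ENNReal.lintegral_mul_le_Lp_mul_Lq μ hconj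
      (f := fun ω => (ENNReal.ofReal (R ^ σ ω)) ^ ((2:ℝ)⁻¹))
      (g := fun ω => (ENNReal.ofReal ((R ^ σ ω)⁻¹)) ^ ((2:ℝ)⁻¹))
      ((hmeasRσ.pow_const _).aemeasurable) ((hmeasRσinv.pow_const _).aemeasurable)
    have hfg : ∀ ω, (ENNReal.ofReal (R ^ σ ω)) ^ ((2:ℝ)⁻¹) *
        (ENNReal.ofReal ((R ^ σ ω)⁻¹)) ^ ((2:ℝ)⁻¹) = 1 := by
      intro ω
      rw [← ENNReal.mul_rpow_of_nonneg _ _ (by norm_num),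
        ← ENNReal.ofReal_mul (hRpow ω).le, mul_inv_cancel₀ (hRpow ω).ne']
      simp
    have hfp : ∀ ω, ((ENNReal.ofReal (R ^ σ ω)) ^ ((2:ℝ)⁻¹)) ^ (2:ℝ) =
        ENNReal.ofReal (R ^ σ ω) := by
      intro ω
      rw [← ENNReal.rpow_mul]
      norm_num
    have hgp : ∀ ω, ((ENNReal.ofReal ((R ^ σ ω)⁻¹)) ^ ((2:ℝ)⁻¹)) ^ (2:ℝ) =
        ENNReal.ofReal ((R ^ σ ω)⁻¹) := by
      intro ω
      rw [← ENNReal.rpow_mul]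
      norm_num
    simp only [Pi.mul_apply, hfg, hfp, hgp, lintegral_const, lintegral_one,
      measure_univ, mul_one, one_div] at h
    -- h : 1 ≤ (∫ ofReal (R^σ))^(1/2) * A^(1/2)
    have h2 : (1:ℝ≥0∞) ≤ (ENNReal.ofReal B) ^ ((2:ℝ)⁻¹) * A ^ ((2:ℝ)⁻¹) := by
      refine h.trans (mul_le_mul_left ?_ _)
      exact ENNReal.rpow_le_rpow hmom (by norm_num)
    have h3 : (1:ℝ≥0∞) ≤ (ENNReal.ofReal B * A) ^ ((2:ℝ)⁻¹) := by
      rwa [ENNReal.mul_rpow_of_nonneg _ _ (by norm_num)]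
    have h4 : (1:ℝ≥0∞) ≤ ENNReal.ofReal B * A := by
      have h5 := ENNReal.rpow_le_rpow h3 (by norm_num : (0:ℝ) ≤ 2)
      rw [← ENNReal.rpow_mul, ENNReal.one_rpow] at h5
      have he : ((2:ℝ)⁻¹) * 2 = 1 := by norm_num
      rwa [he, ENNReal.rpow_one] at h5
    have hB0' : ENNReal.ofReal B ≠ 0 := (ENNReal.ofReal_pos.2 hB0).ne'
    calc (ENNReal.ofReal B)⁻¹ = (ENNReal.ofReal B)⁻¹ * 1 := (mul_one _).symm
      _ ≤ (ENNReal.ofReal B)⁻¹ * (ENNReal.ofReal B * A) := mul_le_mul_right h4 _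
      _ = A := by
          rw [← mul_assoc, ENNReal.inv_mul_cancel hB0' ENNReal.ofReal_ne_top, one_mul]
  -- combine
  calc ENNReal.ofReal (1 / (R * B))
      = ENNReal.ofReal (R⁻¹) * ENNReal.ofReal (B⁻¹) := by
        rw [← ENNReal.ofReal_mul (by positivity)]
        rw [one_div, mul_inv]
    _ ≤ ENNReal.ofReal (R⁻¹) * A := by
        apply mul_le_mul_right
        rw [ENNReal.ofReal_inv_of_pos hB0]
        exact hCS
    _ = ∫⁻ ω, ENNReal.ofReal (R⁻¹) * ENNReal.ofReal ((R ^ σ ω)⁻¹) ∂μ := by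
        rw [hA, ← lintegral_const_mul _ hmeasRσinv]
    _ = ∫⁻ ω, ENNReal.ofReal ((R ^ (σ ω + 1))⁻¹) ∂μ := by
        apply lintegral_congr; intro ω
        rw [← ENNReal.ofReal_mul (by positivity), ← mul_inv, pow_succ, mul_comm]
    _ ≤ _ := by
        apply lintegral_mono; intro ω
        exact ENNReal.ofReal_le_ofReal (hpt ω)
end

section
/- Let X be a countable set, P a Markov kernel on X, and suppose there exist η < 1, b < ∞, a finite set C ⊆ X, and a bounded function V : X → [1, ∞) such that ∑_j V(j) P(j|i) ≤ η V(i) + b·1_C(i) for all i ∈ X. Then for the Markov chain (X_t) with kernel P and any starting state k, the first return time σ_C = inf{t ≥ 1 : X_t ∈ C} satisfies E_k[R^{σ_C}] ≤ V(k)/η + b/(η(1−η)) · R for R = 1/η. In particular E_k[R^{σ_C}] < ∞ for some R > 1. -/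
open MeasureTheory
open scoped ENNReal

/-- A probability vector on a countable state space. -/
def IsProbVec {X : Type*} (π : X → ℝ) : Prop := (∀ j, 0 ≤ π j) ∧ HasSum π 1

/-- A Markov kernel on a countable state space. -/
def IsMarkovKer {X : Type*} (P : X → X → ℝ) : Prop := ∀ i, IsProbVec (P i)

/-- The process `Xp` is a Markov chain with kernel `P` under `μ`: finite-dimensional
distributions factor through `P`. -/
def IsMarkovChain {Ω X : Type*} [MeasurableSpace Ω] (μ : Measure Ω)
    (Xp : ℕ → Ω → X) (P : X → X → ℝ) : Prop :=
  ∀ (t : ℕ) (path : Fin (t + 1) → X) (y : X),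
    (μ {ω | (∀ i : Fin (t + 1), Xp i ω = path i) ∧ Xp (t + 1) ω = y}).toReal =
      (μ {ω | ∀ i : Fin (t + 1), Xp i ω = path i}).toReal * P (path (Fin.last t)) y

/-- First return time of the process to the set `C` (`⊤` if it never returns). -/
noncomputable def retTime {Ω X : Type*} (Xp : ℕ → Ω → X) (C : Set X) (ω : Ω) : ℕ∞ :=
  sInf {t : ℕ∞ | ∃ n : ℕ, t = n ∧ 1 ≤ n ∧ Xp n ω ∈ C}

/-- `R^t` for an extended-natural exponent, with value `⊤` when `t = ⊤`. -/
noncomputable def epow (R : ℝ≥0∞) (t : ℕ∞) : ℝ≥0∞ :=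
  if t = ⊤ then ⊤ else R ^ t.toNat

lemma retTime_one_le {Ω X : Type*} (Xp : ℕ → Ω → X) (C : Set X) (ω : Ω) :
    1 ≤ retTime Xp C ω := by
  refine le_sInf ?_
  rintro s ⟨n, rfl, hn, _⟩
  exact_mod_cast hn

lemma retTime_top {Ω X : Type*} {Xp : ℕ → Ω → X} {C : Set X} {ω : Ω}
    (h : retTime Xp C ω = ⊤) (n : ℕ) (hn : 1 ≤ n) : Xp n ω ∉ C := by
  intro hmem
  have h2 : retTime Xp C ω ≤ (n : ℕ∞) := sInf_le ⟨n, rfl, hn, hmem⟩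
  rw [h] at h2
  simp at h2

lemma retTime_eq_coe {Ω X : Type*} (Xp : ℕ → Ω → X) (C : Set X) (ω : Ω) (t : ℕ) (ht : 1 ≤ t) :
    retTime Xp C ω = (t : ℕ∞) ↔
      ((∀ n : ℕ, 1 ≤ n → n < t → Xp n ω ∉ C) ∧ Xp t ω ∈ C) := by
  constructor
  · intro h
    by_cases hne : {n : ℕ | 1 ≤ n ∧ Xp n ω ∈ C}.Nonempty
    · set T := {n : ℕ | 1 ≤ n ∧ Xp n ω ∈ C} with hT
      have hm := Nat.sInf_mem hne
      have h1 : retTime Xp C ω = ((sInf T : ℕ) : ℕ∞) := by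
        apply le_antisymm
        · exact sInf_le ⟨sInf T, rfl, hm.1, hm.2⟩
        · refine le_sInf ?_
          rintro s ⟨n, rfl, hn1, hnC⟩
          exact_mod_cast Nat.sInf_le (show n ∈ T from ⟨hn1, hnC⟩)
      rw [h] at h1
      have ht' : t = sInf T := by exact_mod_cast h1
      constructor
      · intro n hn1 hnt hnC
        have := Nat.sInf_le (show n ∈ T from ⟨hn1, hnC⟩)
        omega
      · rw [ht']; exact hm.2
    · have hempty : {s : ℕ∞ | ∃ n : ℕ, s = n ∧ 1 ≤ n ∧ Xp n ω ∈ C} = ∅ := by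
        ext s
        simp only [Set.mem_setOf_eq, Set.mem_empty_iff_false, iff_false]
        rintro ⟨n, rfl, hn1, hnC⟩
        exact hne ⟨n, hn1, hnC⟩
      rw [retTime, hempty, sInf_empty] at h
      exact absurd h (by simp)
  · rintro ⟨hmin, hmem⟩
    apply le_antisymm
    · exact sInf_le ⟨t, rfl, ht, hmem⟩
    · refine le_sInf ?_
      rintro s ⟨n, rfl, hn1, hnC⟩
      have h2 : t ≤ n := by
        by_contra hc
        push_neg at hc
        exact hmin n hn1 hc hnC
      exact_mod_cast h2

noncomputable def cylMass {Ω X : Type*} [MeasurableSpace Ω] (μ : Measure Ω)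
    (Xp : ℕ → Ω → X) (t : ℕ) (path : Fin (t + 1) → X) : ℝ≥0∞ :=
  μ {ω | ∀ i : Fin (t + 1), Xp i ω = path i}

def GA {X : Type*} (C : Set X) (k : X) (t : ℕ) : Set (Fin (t + 1) → X) :=
  {path | path 0 = k ∧ ∀ i : Fin (t + 1), i ≠ 0 → path i ∉ C}

def GB {X : Type*} (C : Set X) (k : X) (t : ℕ) : Set (Fin (t + 1) → X) :=
  {path | path 0 = k ∧ (∀ i : Fin (t + 1), i ≠ 0 → i ≠ Fin.last t → path i ∉ C) ∧
    path (Fin.last t) ∈ C}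

noncomputable def wfun {Ω X : Type*} [MeasurableSpace Ω] (μ : Measure Ω)
    (Xp : ℕ → Ω → X) (V : X → ℝ) (t : ℕ) : (Fin (t + 1) → X) → ℝ≥0∞ :=
  fun p => cylMass μ Xp t p * ENNReal.ofReal (V (p (Fin.last t)))

noncomputable def AA {Ω X : Type*} [MeasurableSpace Ω] (μ : Measure Ω)
    (Xp : ℕ → Ω → X) (V : X → ℝ) (C : Set X) (k : X) (t : ℕ) : ℝ≥0∞ :=
  ∑' path : Fin (t + 1) → X, (GA C k t).indicator (wfun μ Xp V t) path

noncomputable def BB {Ω X : Type*} [MeasurableSpace Ω] (μ : Measure Ω)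
    (Xp : ℕ → Ω → X) (V : X → ℝ) (C : Set X) (k : X) (t : ℕ) : ℝ≥0∞ :=
  ∑' path : Fin (t + 1) → X, (GB C k t).indicator (wfun μ Xp V t) path

lemma cyl_snoc {Ω X : Type*} [MeasurableSpace Ω] (μ : Measure Ω) [IsProbabilityMeasure μ]
    (Xp : ℕ → Ω → X) (P : X → X → ℝ) (hchain : IsMarkovChain μ Xp P)
    (t : ℕ) (path : Fin (t + 1) → X) (y : X) :
    cylMass μ Xp (t + 1) (Fin.snoc path y) =
      cylMass μ Xp t path * ENNReal.ofReal (P (path (Fin.last t)) y) := by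
  have hset : {ω | ∀ i : Fin (t + 2), Xp i ω = (Fin.snoc path y : Fin (t + 2) → X) i}
      = {ω | (∀ i : Fin (t + 1), Xp i ω = path i) ∧ Xp (t + 1) ω = y} := by
    ext ω
    constructor
    · intro h
      refine ⟨fun i => ?_, ?_⟩
      · have h2 := h (Fin.castSucc i)
        rwa [Fin.snoc_castSucc, Fin.coe_castSucc] at h2
      · have h2 := h (Fin.last (t + 1))
        rwa [Fin.snoc_last, Fin.val_last] at h2
    · rintro ⟨h1, h2⟩ i
      refine Fin.lastCases ?_ ?_ i
      · rwa [Fin.snoc_last, Fin.val_last]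
      · intro j
        rw [Fin.snoc_castSucc, Fin.coe_castSucc]
        exact h1 j
  have hfin1 : μ {ω | ∀ i : Fin (t + 1), Xp i ω = path i} ≠ ⊤ := measure_ne_top μ _
  have hfin2 : μ {ω | (∀ i : Fin (t + 1), Xp i ω = path i) ∧ Xp (t + 1) ω = y} ≠ ⊤ :=
    measure_ne_top μ _
  have h := hchain t path y
  rw [cylMass, hset, ← ENNReal.ofReal_toReal hfin2, h,
    ENNReal.ofReal_mul ENNReal.toReal_nonneg, ENNReal.ofReal_toReal hfin1]
  rfl

lemma mem_GA_snoc {X : Type*} (C : Set X) (k : X) (t : ℕ) (q : Fin (t + 1) → X) (y : X) :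
    (Fin.snoc q y ∈ GA C k (t + 1)) ↔ (q ∈ GA C k t ∧ y ∉ C) := by
  simp only [GA, Set.mem_setOf_eq]
  constructor
  · rintro ⟨h0, hi⟩
    rw [← Fin.castSucc_zero, Fin.snoc_castSucc] at h0
    refine ⟨⟨h0, fun i hi0 => ?_⟩, ?_⟩
    · have h2 := hi (Fin.castSucc i) (fun h => hi0 (Fin.castSucc_injective _ (h.trans Fin.castSucc_zero.symm)))
      rwa [Fin.snoc_castSucc] at h2
    · have h2 := hi (Fin.last (t + 1)) (by simp [Fin.ext_iff])
      rwa [Fin.snoc_last] at h2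
  · rintro ⟨⟨h0, hi⟩, hy⟩
    constructor
    · rw [← Fin.castSucc_zero, Fin.snoc_castSucc]; exact h0
    · intro i hi0
      refine Fin.lastCases ?_ ?_ i hi0
      · intro _; rwa [Fin.snoc_last]
      · intro j hj0
        rw [Fin.snoc_castSucc]
        exact hi j (fun h => hj0 (by rw [h, Fin.castSucc_zero]))

lemma mem_GB_snoc {X : Type*} (C : Set X) (k : X) (t : ℕ) (q : Fin (t + 1) → X) (y : X) :
    (Fin.snoc q y ∈ GB C k (t + 1)) ↔ (q ∈ GA C k t ∧ y ∈ C) := by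
  simp only [GB, GA, Set.mem_setOf_eq]
  constructor
  · rintro ⟨h0, hi, hlast⟩
    rw [← Fin.castSucc_zero, Fin.snoc_castSucc] at h0
    rw [Fin.snoc_last] at hlast
    refine ⟨⟨h0, fun i hi0 => ?_⟩, hlast⟩
    have h2 := hi (Fin.castSucc i) (fun h => hi0 (Fin.castSucc_injective _ (h.trans Fin.castSucc_zero.symm)))
      (Fin.castSucc_lt_last i).ne
    rwa [Fin.snoc_castSucc] at h2
  · rintro ⟨⟨h0, hi⟩, hy⟩
    refine ⟨?_, ?_, ?_⟩
    · rw [← Fin.castSucc_zero, Fin.snoc_castSucc]; exact h0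
    · intro i hi0 hil
      refine Fin.lastCases ?_ ?_ i hi0 hil
      · intro _ h; exact absurd rfl h
      · intro j hj0 _
        rw [Fin.snoc_castSucc]
        exact hi j (fun h => hj0 (by rw [h, Fin.castSucc_zero]))
    · rwa [Fin.snoc_last]

lemma drift_ennreal {X : Type*} (P : X → X → ℝ) (hP : IsMarkovKer P)
    (η b : ℝ) (C : Set X) (V : X → ℝ) (hV1 : ∀ k, 1 ≤ V k) (hVbdd : ∃ c : ℝ, ∀ k, V k ≤ c)
    (hdrift : ∀ i, ∑' j, V j * P i j ≤ η * V i + b * C.indicator (fun _ => (1 : ℝ)) i)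
    (i : X) :
    ∑' j, ENNReal.ofReal (P i j) * ENNReal.ofReal (V j)
      ≤ ENNReal.ofReal (η * V i + b * C.indicator (fun _ => (1 : ℝ)) i) := by
  obtain ⟨c, hc⟩ := hVbdd
  have hnn : ∀ j, 0 ≤ V j * P i j :=
    fun j => mul_nonneg (zero_le_one.trans (hV1 j)) ((hP i).1 j)
  have hsumm : Summable (fun j => V j * P i j) :=
    Summable.of_nonneg_of_le hnn
      (fun j => mul_le_mul_of_nonneg_right (hc j) ((hP i).1 j))
      ((hP i).2.summable.mul_left c)
  calc ∑' j, ENNReal.ofReal (P i j) * ENNReal.ofReal (V j)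
      = ∑' j, ENNReal.ofReal (V j * P i j) := by
        refine tsum_congr fun j => ?_
        rw [ENNReal.ofReal_mul (zero_le_one.trans (hV1 j)), mul_comm]
    _ = ENNReal.ofReal (∑' j, V j * P i j) :=
        (ENNReal.ofReal_tsum_of_nonneg hnn hsumm).symm
    _ ≤ _ := ENNReal.ofReal_le_ofReal (hdrift i)

lemma wfun_snoc {Ω X : Type*} [MeasurableSpace Ω] (μ : Measure Ω) [IsProbabilityMeasure μ]
    (Xp : ℕ → Ω → X) (P : X → X → ℝ) (hchain : IsMarkovChain μ Xp P) (V : X → ℝ)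
    (t : ℕ) (q : Fin (t + 1) → X) (y : X) :
    wfun μ Xp V (t + 1) (Fin.snoc q y) =
      cylMass μ Xp t q * (ENNReal.ofReal (P (q (Fin.last t)) y) * ENNReal.ofReal (V y)) := by
  have hsl : (Fin.snoc q y : Fin (t + 2) → X) (Fin.last (t + 1)) = y := Fin.snoc_last _ _
  rw [wfun, cyl_snoc μ Xp P hchain t q y, hsl, mul_assoc]

lemma step_ineq {Ω X : Type*} [MeasurableSpace Ω] [Countable X]
    (μ : Measure Ω) [IsProbabilityMeasure μ]
    (P : X → X → ℝ) (hP : IsMarkovKer P)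
    (η b : ℝ) (C : Set X) (V : X → ℝ) (hV1 : ∀ k, 1 ≤ V k) (hVbdd : ∃ c : ℝ, ∀ k, V k ≤ c)
    (hdrift : ∀ i, ∑' j, V j * P i j ≤ η * V i + b * C.indicator (fun _ => (1 : ℝ)) i)
    (k : X) (Xp : ℕ → Ω → X) (hchain : IsMarkovChain μ Xp P) (t : ℕ) :
    AA μ Xp V C k (t + 1) + BB μ Xp V C k (t + 1) ≤
      ∑' q : Fin (t + 1) → X, (GA C k t).indicator
        (fun q' => cylMass μ Xp t q' *
          ENNReal.ofReal (η * V (q' (Fin.last t)) +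
            b * C.indicator (fun _ => (1 : ℝ)) (q' (Fin.last t)))) q := by
  classical
  set F : (Fin (t + 2) → X) → ℝ≥0∞ := wfun μ Xp V (t + 1) with hF
  set e : X × (Fin (t + 1) → X) ≃ (Fin (t + 2) → X) :=
    Fin.snocEquiv (fun _ : Fin (t + 2) => X) with he
  have hE : ∀ (y : X) (q : Fin (t + 1) → X), e (y, q) = Fin.snoc q y :=
    fun y q => funext fun i => rfl
  have key : ∀ q : Fin (t + 1) → X,
      (∑' y : X, ((GA C k (t + 1)).indicator F (e (y, q)) +
        (GB C k (t + 1)).indicator F (e (y, q)))) ≤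
      (GA C k t).indicator
        (fun q' => cylMass μ Xp t q' *
          ENNReal.ofReal (η * V (q' (Fin.last t)) +
            b * C.indicator (fun _ => (1 : ℝ)) (q' (Fin.last t)))) q := by
    intro q
    by_cases hq : q ∈ GA C k t
    · have hrw : ∀ y : X,
          (GA C k (t + 1)).indicator F (e (y, q)) + (GB C k (t + 1)).indicator F (e (y, q))
          = cylMass μ Xp t q * (ENNReal.ofReal (P (q (Fin.last t)) y) * ENNReal.ofReal (V y)) := by
        intro y
        rw [hE y q]
        by_cases hy : y ∈ C
        · rw [Set.indicator_of_notMem (fun hmem => ((mem_GA_snoc C k t q y).mp hmem).2 hy),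
            Set.indicator_of_mem ((mem_GB_snoc C k t q y).mpr ⟨hq, hy⟩), zero_add, hF,
            wfun_snoc μ Xp P hchain V t q y]
        · rw [Set.indicator_of_mem ((mem_GA_snoc C k t q y).mpr ⟨hq, hy⟩),
            Set.indicator_of_notMem (fun hmem => hy ((mem_GB_snoc C k t q y).mp hmem).2),
            add_zero, hF, wfun_snoc μ Xp P hchain V t q y]
      rw [tsum_congr hrw, ENNReal.tsum_mul_left, Set.indicator_of_mem hq]
      exact mul_le_mul_right
        (drift_ennreal P hP η b C V hV1 hVbdd hdrift (q (Fin.last t))) _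
    · have hz : ∀ y : X,
          (GA C k (t + 1)).indicator F (e (y, q)) + (GB C k (t + 1)).indicator F (e (y, q))
          = 0 := by
        intro y
        rw [hE y q,
          Set.indicator_of_notMem (fun hmem => hq ((mem_GA_snoc C k t q y).mp hmem).1),
          Set.indicator_of_notMem (fun hmem => hq ((mem_GB_snoc C k t q y).mp hmem).1),
          add_zero]
      rw [tsum_congr hz, tsum_zero]
      exact zero_le
  calc AA μ Xp V C k (t + 1) + BB μ Xp V C k (t + 1)
      = ∑' p : Fin (t + 2) → X,
          ((GA C k (t + 1)).indicator F p + (GB C k (t + 1)).indicator F p) := by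
        rw [AA, BB, ENNReal.tsum_add]
    _ = ∑' z : X × (Fin (t + 1) → X),
          ((GA C k (t + 1)).indicator F (e z) + (GB C k (t + 1)).indicator F (e z)) :=
        (e.tsum_eq _).symm
    _ = ∑' z : X × (Fin (t + 1) → X),
          ((GA C k (t + 1)).indicator F (e (z.1, z.2)) + (GB C k (t + 1)).indicator F (e (z.1, z.2))) :=
        tsum_congr (fun z => by rcases z with ⟨y, q⟩; rfl)
    _ = ∑' (y : X) (q : Fin (t + 1) → X),
          ((GA C k (t + 1)).indicator F (e (y, q)) + (GB C k (t + 1)).indicator F (e (y, q))) :=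
        ENNReal.tsum_prod (f := fun y q =>
          (GA C k (t + 1)).indicator F (e (y, q)) + (GB C k (t + 1)).indicator F (e (y, q)))
    _ = ∑' (q : Fin (t + 1) → X) (y : X),
          ((GA C k (t + 1)).indicator F (e (y, q)) + (GB C k (t + 1)).indicator F (e (y, q))) :=
        ENNReal.tsum_comm
    _ ≤ _ := ENNReal.tsum_le_tsum key

lemma base_ineq {Ω X : Type*} [MeasurableSpace Ω] [Countable X]
    (μ : Measure Ω) [IsProbabilityMeasure μ]
    (P : X → X → ℝ) (hP : IsMarkovKer P)
    (η b : ℝ) (hη0 : 0 < η) (hb : 0 ≤ b)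
    (C : Set X) (V : X → ℝ) (hV1 : ∀ k, 1 ≤ V k) (hVbdd : ∃ c : ℝ, ∀ k, V k ≤ c)
    (hdrift : ∀ i, ∑' j, V j * P i j ≤ η * V i + b * C.indicator (fun _ => (1 : ℝ)) i)
    (k : X) (Xp : ℕ → Ω → X) (hstart : ∀ ω, Xp 0 ω = k) (hchain : IsMarkovChain μ Xp P) :
    AA μ Xp V C k 1 + BB μ Xp V C k 1 ≤
      ENNReal.ofReal η * ENNReal.ofReal (V k) + ENNReal.ofReal b := by
  refine le_trans (step_ineq μ P hP η b C V hV1 hVbdd hdrift k Xp hchain 0) ?_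
  have hsingle : ∑' q : Fin 1 → X, (GA C k 0).indicator
      (fun q' => cylMass μ Xp 0 q' *
        ENNReal.ofReal (η * V (q' (Fin.last 0)) +
          b * C.indicator (fun _ => (1 : ℝ)) (q' (Fin.last 0)))) q
      = ENNReal.ofReal (η * V k + b * C.indicator (fun _ => (1 : ℝ)) k) := by
    rw [tsum_eq_single (fun _ : Fin 1 => k) ?_]
    · have hmem : (fun _ : Fin 1 => k) ∈ GA C k 0 :=
        ⟨rfl, fun i hi => absurd (Fin.eq_zero i) hi⟩
      rw [Set.indicator_of_mem hmem]
      have huniv : {ω : Ω | ∀ i : Fin 1, Xp i ω = (fun _ : Fin 1 => k) i} = Set.univ := by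
        ext ω
        simp only [Set.mem_setOf_eq, Set.mem_univ, iff_true]
        intro i
        rw [Fin.eq_zero i]
        simpa using hstart ω
      simp only [cylMass, huniv, measure_univ, one_mul]
    · intro q hq
      apply Set.indicator_of_notMem
      intro hmem
      apply hq
      funext i
      rw [Fin.eq_zero i]
      exact hmem.1
  rw [hsingle]
  calc ENNReal.ofReal (η * V k + b * C.indicator (fun _ => (1 : ℝ)) k)
      ≤ ENNReal.ofReal (η * V k) + ENNReal.ofReal (b * C.indicator (fun _ => (1 : ℝ)) k) :=
        ENNReal.ofReal_add_le
    _ ≤ ENNReal.ofReal η * ENNReal.ofReal (V k) + ENNReal.ofReal b := by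
        rw [← ENNReal.ofReal_mul hη0.le]
        gcongr
        have hle1 : C.indicator (fun _ => (1 : ℝ)) k ≤ 1 := by
          by_cases hk : k ∈ C <;> simp [Set.indicator_apply, hk]
        exact (mul_le_mul_of_nonneg_left hle1 hb).trans_eq (mul_one b)

lemma step_ineq' {Ω X : Type*} [MeasurableSpace Ω] [Countable X]
    (μ : Measure Ω) [IsProbabilityMeasure μ]
    (P : X → X → ℝ) (hP : IsMarkovKer P)
    (η b : ℝ) (hη0 : 0 < η)
    (C : Set X) (V : X → ℝ) (hV1 : ∀ k, 1 ≤ V k) (hVbdd : ∃ c : ℝ, ∀ k, V k ≤ c)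
    (hdrift : ∀ i, ∑' j, V j * P i j ≤ η * V i + b * C.indicator (fun _ => (1 : ℝ)) i)
    (k : X) (Xp : ℕ → Ω → X) (hchain : IsMarkovChain μ Xp P) (t : ℕ) :
    AA μ Xp V C k (t + 2) + BB μ Xp V C k (t + 2) ≤
      ENNReal.ofReal η * AA μ Xp V C k (t + 1) := by
  refine le_trans (step_ineq μ P hP η b C V hV1 hVbdd hdrift k Xp hchain (t + 1)) ?_
  have hpt : ∀ q : Fin (t + 2) → X,
      (GA C k (t + 1)).indicator
        (fun q' => cylMass μ Xp (t + 1) q' *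
          ENNReal.ofReal (η * V (q' (Fin.last (t + 1))) +
            b * C.indicator (fun _ => (1 : ℝ)) (q' (Fin.last (t + 1))))) q
      = ENNReal.ofReal η * (GA C k (t + 1)).indicator (wfun μ Xp V (t + 1)) q := by
    intro q
    by_cases hq : q ∈ GA C k (t + 1)
    · rw [Set.indicator_of_mem hq, Set.indicator_of_mem hq]
      have hlast : q (Fin.last (t + 1)) ∉ C := hq.2 _ (by simp [Fin.ext_iff])
      rw [Set.indicator_of_notMem hlast, mul_zero, add_zero,
        ENNReal.ofReal_mul hη0.le, wfun]
      ring
    · rw [Set.indicator_of_notMem hq, Set.indicator_of_notMem hq, mul_zero]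
  rw [tsum_congr hpt, ENNReal.tsum_mul_left]
  rfl

lemma telescope {Ω X : Type*} [MeasurableSpace Ω] [Countable X]
    (μ : Measure Ω) [IsProbabilityMeasure μ]
    (P : X → X → ℝ) (hP : IsMarkovKer P)
    (η b : ℝ) (hη0 : 0 < η) (hb : 0 ≤ b)
    (C : Set X) (V : X → ℝ) (hV1 : ∀ k, 1 ≤ V k) (hVbdd : ∃ c : ℝ, ∀ k, V k ≤ c)
    (hdrift : ∀ i, ∑' j, V j * P i j ≤ η * V i + b * C.indicator (fun _ => (1 : ℝ)) i)
    (k : X) (Xp : ℕ → Ω → X) (hstart : ∀ ω, Xp 0 ω = k) (hchain : IsMarkovChain μ Xp P)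
    (T : ℕ) :
    (ENNReal.ofReal (1 / η)) ^ (T + 1) * AA μ Xp V C k (T + 1)
      + ∑ j ∈ Finset.range (T + 1),
          (ENNReal.ofReal (1 / η)) ^ (j + 1) * BB μ Xp V C k (j + 1)
      ≤ ENNReal.ofReal (V k) + ENNReal.ofReal (1 / η) * ENNReal.ofReal b := by
  set R : ℝ≥0∞ := ENNReal.ofReal (1 / η) with hR
  have hRη : R * ENNReal.ofReal η = 1 := by
    rw [hR, ← ENNReal.ofReal_mul (by positivity), one_div, inv_mul_cancel₀ hη0.ne',
      ENNReal.ofReal_one]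
  induction T with
  | zero =>
      rw [Finset.sum_range_one]
      calc R ^ 1 * AA μ Xp V C k 1 + R ^ 1 * BB μ Xp V C k 1
          = R * (AA μ Xp V C k 1 + BB μ Xp V C k 1) := by rw [pow_one, mul_add]
        _ ≤ R * (ENNReal.ofReal η * ENNReal.ofReal (V k) + ENNReal.ofReal b) :=
            mul_le_mul_right
              (base_ineq μ P hP η b hη0 hb C V hV1 hVbdd hdrift k Xp hstart hchain) _
        _ = (R * ENNReal.ofReal η) * ENNReal.ofReal (V k) + R * ENNReal.ofReal b := by ring
        _ = ENNReal.ofReal (V k) + R * ENNReal.ofReal b := by rw [hRη, one_mul]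
  | succ T ih =>
      rw [Finset.sum_range_succ]
      calc R ^ (T + 2) * AA μ Xp V C k (T + 2)
            + (∑ j ∈ Finset.range (T + 1), R ^ (j + 1) * BB μ Xp V C k (j + 1)
              + R ^ (T + 2) * BB μ Xp V C k (T + 2))
          = R ^ (T + 2) * (AA μ Xp V C k (T + 2) + BB μ Xp V C k (T + 2))
            + ∑ j ∈ Finset.range (T + 1), R ^ (j + 1) * BB μ Xp V C k (j + 1) := by ring
        _ ≤ R ^ (T + 2) * (ENNReal.ofReal η * AA μ Xp V C k (T + 1))
            + ∑ j ∈ Finset.range (T + 1), R ^ (j + 1) * BB μ Xp V C k (j + 1) :=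
            add_le_add_left
              (mul_le_mul_right
                (step_ineq' μ P hP η b hη0 C V hV1 hVbdd hdrift k Xp hchain T) _) _
        _ = R ^ (T + 1) * ((R * ENNReal.ofReal η) * AA μ Xp V C k (T + 1))
            + ∑ j ∈ Finset.range (T + 1), R ^ (j + 1) * BB μ Xp V C k (j + 1) := by
            rw [pow_succ]; ring
        _ = R ^ (T + 1) * AA μ Xp V C k (T + 1)
            + ∑ j ∈ Finset.range (T + 1), R ^ (j + 1) * BB μ Xp V C k (j + 1) := by
            rw [hRη, one_mul]
        _ ≤ _ := ih

lemma mu_ret_le_BB {Ω X : Type*} [MeasurableSpace Ω] [Countable X]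
    (μ : Measure Ω) (C : Set X) (V : X → ℝ) (hV1 : ∀ k, 1 ≤ V k)
    (k : X) (Xp : ℕ → Ω → X) (hstart : ∀ ω, Xp 0 ω = k) (t : ℕ) :
    μ {ω | (∀ n : ℕ, 1 ≤ n → n < t + 1 → Xp n ω ∉ C) ∧ Xp (t + 1) ω ∈ C}
      ≤ BB μ Xp V C k (t + 1) := by
  have hcov : {ω | (∀ n : ℕ, 1 ≤ n → n < t + 1 → Xp n ω ∉ C) ∧ Xp (t + 1) ω ∈ C}
      ⊆ ⋃ p : (GB C k (t + 1) : Set (Fin (t + 2) → X)),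
          {ω | ∀ i : Fin (t + 2), Xp i ω = (p : Fin (t + 2) → X) i} := by
    intro ω hω
    refine Set.mem_iUnion.mpr ⟨⟨fun i => Xp i ω, ?_, ?_, ?_⟩, fun i => rfl⟩
    · simpa using hstart ω
    · intro i hi0 hil
      have h1 : 1 ≤ (i : ℕ) := by
        rcases Nat.eq_zero_or_pos (i : ℕ) with h | h
        · exact absurd (Fin.ext h) hi0
        · exact h
      have h2 : (i : ℕ) ≠ t + 1 := by
        intro hc
        exact hil (Fin.ext (by simpa using hc))
      have h3 : (i : ℕ) < t + 2 := i.isLt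
      exact hω.1 i h1 (by omega)
    · have hlv : ((Fin.last (t + 1) : Fin (t + 2)) : ℕ) = t + 1 := Fin.val_last _
      simpa [hlv] using hω.2
  calc μ {ω | (∀ n : ℕ, 1 ≤ n → n < t + 1 → Xp n ω ∉ C) ∧ Xp (t + 1) ω ∈ C}
      ≤ μ (⋃ p : (GB C k (t + 1) : Set (Fin (t + 2) → X)),
          {ω | ∀ i : Fin (t + 2), Xp i ω = (p : Fin (t + 2) → X) i}) := measure_mono hcov
    _ ≤ ∑' p : (GB C k (t + 1) : Set (Fin (t + 2) → X)),
          μ {ω | ∀ i : Fin (t + 2), Xp i ω = (p : Fin (t + 2) → X) i} := measure_iUnion_le _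
    _ = ∑' p : Fin (t + 2) → X, (GB C k (t + 1)).indicator (cylMass μ Xp (t + 1)) p :=
        tsum_subtype (GB C k (t + 1)) (cylMass μ Xp (t + 1))
    _ ≤ BB μ Xp V C k (t + 1) := by
        refine ENNReal.tsum_le_tsum fun p => ?_
        by_cases hp : p ∈ GB C k (t + 1)
        · rw [Set.indicator_of_mem hp, Set.indicator_of_mem hp, wfun]
          calc cylMass μ Xp (t + 1) p = cylMass μ Xp (t + 1) p * 1 := (mul_one _).symm
            _ ≤ _ := mul_le_mul_right
                (ENNReal.one_le_ofReal.mpr (hV1 (p (Fin.last (t + 1))))) _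
        · rw [Set.indicator_of_notMem hp, Set.indicator_of_notMem hp]

lemma mu_noret_le_AA {Ω X : Type*} [MeasurableSpace Ω] [Countable X]
    (μ : Measure Ω) (C : Set X) (V : X → ℝ) (hV1 : ∀ k, 1 ≤ V k)
    (k : X) (Xp : ℕ → Ω → X) (hstart : ∀ ω, Xp 0 ω = k) (t : ℕ) :
    μ {ω | ∀ n : ℕ, 1 ≤ n → n ≤ t + 1 → Xp n ω ∉ C}
      ≤ AA μ Xp V C k (t + 1) := by
  have hcov : {ω | ∀ n : ℕ, 1 ≤ n → n ≤ t + 1 → Xp n ω ∉ C}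
      ⊆ ⋃ p : (GA C k (t + 1) : Set (Fin (t + 2) → X)),
          {ω | ∀ i : Fin (t + 2), Xp i ω = (p : Fin (t + 2) → X) i} := by
    intro ω hω
    refine Set.mem_iUnion.mpr ⟨⟨fun i => Xp i ω, ?_, ?_⟩, fun i => rfl⟩
    · simpa using hstart ω
    · intro i hi0
      have h1 : 1 ≤ (i : ℕ) := by
        rcases Nat.eq_zero_or_pos (i : ℕ) with h | h
        · exact absurd (Fin.ext h) hi0
        · exact h
      have h3 : (i : ℕ) < t + 2 := i.isLt
      exact hω i h1 (by omega)
  calc μ {ω | ∀ n : ℕ, 1 ≤ n → n ≤ t + 1 → Xp n ω ∉ C}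
      ≤ μ (⋃ p : (GA C k (t + 1) : Set (Fin (t + 2) → X)),
          {ω | ∀ i : Fin (t + 2), Xp i ω = (p : Fin (t + 2) → X) i}) := measure_mono hcov
    _ ≤ ∑' p : (GA C k (t + 1) : Set (Fin (t + 2) → X)),
          μ {ω | ∀ i : Fin (t + 2), Xp i ω = (p : Fin (t + 2) → X) i} := measure_iUnion_le _
    _ = ∑' p : Fin (t + 2) → X, (GA C k (t + 1)).indicator (cylMass μ Xp (t + 1)) p :=
        tsum_subtype (GA C k (t + 1)) (cylMass μ Xp (t + 1))
    _ ≤ AA μ Xp V C k (t + 1) := by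
        refine ENNReal.tsum_le_tsum fun p => ?_
        by_cases hp : p ∈ GA C k (t + 1)
        · rw [Set.indicator_of_mem hp, Set.indicator_of_mem hp, wfun]
          calc cylMass μ Xp (t + 1) p = cylMass μ Xp (t + 1) p * 1 := (mul_one _).symm
            _ ≤ _ := mul_le_mul_right
                (ENNReal.one_le_ofReal.mpr (hV1 (p (Fin.last (t + 1))))) _
        · rw [Set.indicator_of_notMem hp, Set.indicator_of_notMem hp]

/-- Geometric drift implies geometric recurrence ((c) ⟹ (a) in Prop. `lpstblaprecur`,
cf. Meyn–Tweedie Thm 15.2.5): a Foster–Lyapunov condition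
`∑_j V(j)P(j|i) ≤ η V(i) + b·1_C(i)` with `V : X → [1,∞)` bounded, `C` finite, gives
`E_k[R^{σ_C}] ≤ V(k)/η + b/(η(1−η))·R` for `R = 1/η`; in particular
`E_k[R'^{σ_C}] < ∞` for some `R' > 1`. -/
theorem stmt9 {Ω X : Type*} [MeasurableSpace Ω] [MeasurableSpace X]
    [MeasurableSingletonClass X] [Countable X]
    (μ : Measure Ω) [IsProbabilityMeasure μ]
    (P : X → X → ℝ) (hP : IsMarkovKer P)
    (η b : ℝ) (hη0 : 0 < η) (hη1 : η < 1) (hb : 0 ≤ b)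
    (C : Set X) (hC : C.Finite)
    (V : X → ℝ) (hV1 : ∀ k, 1 ≤ V k) (hVbdd : ∃ c : ℝ, ∀ k, V k ≤ c)
    (hdrift : ∀ i, ∑' j, V j * P i j ≤ η * V i + b * C.indicator (fun _ => (1 : ℝ)) i)
    (k : X) (Xp : ℕ → Ω → X) (hXmeas : ∀ t, Measurable (Xp t))
    (hstart : ∀ ω, Xp 0 ω = k)
    (hchain : IsMarkovChain μ Xp P) :
    (∫⁻ ω, epow (ENNReal.ofReal (1 / η)) (retTime Xp C ω) ∂μ ≤
        ENNReal.ofReal (V k / η + b / (η * (1 - η)) * (1 / η))) ∧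
    ∃ R' : ℝ, 1 < R' ∧ ∫⁻ ω, epow (ENNReal.ofReal R') (retTime Xp C ω) ∂μ < ⊤ := by
  classical
  set R : ℝ≥0∞ := ENNReal.ofReal (1 / η) with hR
  set K : ℝ≥0∞ := ENNReal.ofReal (V k) + R * ENNReal.ofReal b with hK
  have hηlt1 : ENNReal.ofReal η < 1 := by
    rw [← ENNReal.ofReal_one]
    exact ENNReal.ofReal_lt_ofReal_iff_of_nonneg hη0.le |>.mpr hη1
  have hRη : R * ENNReal.ofReal η = 1 := by
    rw [hR, ← ENNReal.ofReal_mul (by positivity), one_div, inv_mul_cancel₀ hη0.ne',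
      ENNReal.ofReal_one]
  have hKne : K ≠ ⊤ := by
    rw [hK, hR]
    exact ENNReal.add_ne_top.mpr ⟨ENNReal.ofReal_ne_top,
      ENNReal.mul_ne_top ENNReal.ofReal_ne_top ENNReal.ofReal_ne_top⟩
  have hCmeas : MeasurableSet C := hC.measurableSet
  -- the event {retTime = 0} is empty
  have hzero : {ω | retTime Xp C ω = ((0 : ℕ) : ℕ∞)} = ∅ := by
    ext ω
    simp only [Set.mem_setOf_eq, Set.mem_empty_iff_false, iff_false]
    intro h
    have h1 := retTime_one_le Xp C ω
    rw [h] at h1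
    simp at h1
  -- measurability of level sets
  have hMt : ∀ t : ℕ, MeasurableSet {ω | retTime Xp C ω = ((t : ℕ) : ℕ∞)} := by
    intro t
    cases t with
    | zero => rw [hzero]; exact MeasurableSet.empty
    | succ t =>
        have hev : {ω | retTime Xp C ω = (((t + 1 : ℕ)) : ℕ∞)}
            = (⋂ (n : ℕ), ⋂ (_ : 1 ≤ n), ⋂ (_ : n < t + 1), (Xp n) ⁻¹' Cᶜ)
              ∩ (Xp (t + 1)) ⁻¹' C := by
          ext ω
          rw [Set.mem_setOf_eq, retTime_eq_coe Xp C ω (t + 1) (by omega)]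
          simp [Set.mem_iInter, Set.mem_inter_iff]
        rw [hev]
        exact (MeasurableSet.iInter fun n => MeasurableSet.iInter fun _ =>
          MeasurableSet.iInter fun _ => (hXmeas n) hCmeas.compl).inter
          ((hXmeas (t + 1)) hCmeas)
  -- AA is exponentially small
  have hAle : ∀ T : ℕ, AA μ Xp V C k (T + 1) ≤ (ENNReal.ofReal η) ^ (T + 1) * K := by
    intro T
    have htel := telescope μ P hP η b hη0 hb C V hV1 hVbdd hdrift k Xp hstart hchain T
    have hRA : R ^ (T + 1) * AA μ Xp V C k (T + 1) ≤ K :=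
      (self_le_add_right _ _).trans htel
    have h1 : (ENNReal.ofReal η) ^ (T + 1) * R ^ (T + 1) = 1 := by
      rw [← mul_pow, mul_comm, hRη, one_pow]
    calc AA μ Xp V C k (T + 1)
        = ((ENNReal.ofReal η) ^ (T + 1) * R ^ (T + 1)) * AA μ Xp V C k (T + 1) := by
          rw [h1, one_mul]
      _ = (ENNReal.ofReal η) ^ (T + 1) * (R ^ (T + 1) * AA μ Xp V C k (T + 1)) := by
          rw [mul_assoc]
      _ ≤ (ENNReal.ofReal η) ^ (T + 1) * K := mul_le_mul_right hRA _
  -- the return time is a.s. finite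
  have htop0 : μ {ω | retTime Xp C ω = ⊤} = 0 := by
    have hsub : ∀ T : ℕ, μ {ω | retTime Xp C ω = ⊤} ≤ (ENNReal.ofReal η) ^ (T + 1) * K := by
      intro T
      have hsub2 : {ω | retTime Xp C ω = ⊤}
          ⊆ {ω | ∀ n : ℕ, 1 ≤ n → n ≤ T + 1 → Xp n ω ∉ C} :=
        fun ω hω n hn _ => retTime_top hω n hn
      exact le_trans (measure_mono hsub2)
        (le_trans (mu_noret_le_AA μ C V hV1 k Xp hstart T) (hAle T))
    have htend : Filter.Tendsto (fun T : ℕ => (ENNReal.ofReal η) ^ (T + 1) * K)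
        Filter.atTop (nhds 0) := by
      have h1 : Filter.Tendsto (fun T : ℕ => (ENNReal.ofReal η) ^ (T + 1))
          Filter.atTop (nhds 0) :=
        (ENNReal.tendsto_pow_atTop_nhds_zero_of_lt_one hηlt1).comp
          (Filter.tendsto_add_atTop_nat 1)
      simpa using ENNReal.Tendsto.mul_const h1 (Or.inr hKne)
    exact le_antisymm (ge_of_tendsto' htend hsub) zero_le
  -- rewrite the integral
  have hae : ∀ᵐ ω ∂μ, retTime Xp C ω ≠ ⊤ := by
    rw [MeasureTheory.ae_iff]
    simpa only [not_not] using htop0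
  have hfg : (fun ω => epow R (retTime Xp C ω)) =ᵐ[μ]
      (fun ω => ∑' t : ℕ,
        Set.indicator {ω' | retTime Xp C ω' = ((t : ℕ) : ℕ∞)} (fun _ => R ^ t) ω) := by
    filter_upwards [hae] with ω hω
    obtain ⟨t₀, ht₀⟩ := WithTop.ne_top_iff_exists.mp hω
    have ht₀' : ((t₀ : ℕ) : ℕ∞) = retTime Xp C ω := by exact_mod_cast ht₀
    have hne : ((t₀ : ℕ) : ℕ∞) ≠ ⊤ := by rw [ht₀']; exact hω
    have hept : epow R (retTime Xp C ω) = R ^ t₀ := by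
      rw [← ht₀']
      simp only [epow, if_neg hne, ENat.toNat_coe]
    have hsingle : (∑' t : ℕ,
        Set.indicator {ω' | retTime Xp C ω' = ((t : ℕ) : ℕ∞)} (fun _ => R ^ t) ω) = R ^ t₀ := by
      refine (tsum_eq_single t₀ ?_).trans ?_
      · intro t ht
        apply Set.indicator_of_notMem
        intro hmem
        rw [Set.mem_setOf_eq] at hmem
        have htt : t₀ = t := by exact_mod_cast ht₀'.trans hmem
        exact ht htt.symm
      · exact Set.indicator_of_mem
          (show ω ∈ {ω' | retTime Xp C ω' = ((t₀ : ℕ) : ℕ∞)} from ht₀'.symm) _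
    rw [hept, hsingle]
  have hmain : ∫⁻ ω, epow R (retTime Xp C ω) ∂μ ≤ K := by
    calc ∫⁻ ω, epow R (retTime Xp C ω) ∂μ
        = ∫⁻ ω, ∑' t : ℕ,
            Set.indicator {ω' | retTime Xp C ω' = ((t : ℕ) : ℕ∞)} (fun _ => R ^ t) ω ∂μ :=
          lintegral_congr_ae hfg
      _ = ∑' t : ℕ, ∫⁻ ω,
            Set.indicator {ω' | retTime Xp C ω' = ((t : ℕ) : ℕ∞)} (fun _ => R ^ t) ω ∂μ :=
          lintegral_tsum fun t => (measurable_const.indicator (hMt t)).aemeasurable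
      _ = ∑' t : ℕ, R ^ t * μ {ω' | retTime Xp C ω' = ((t : ℕ) : ℕ∞)} := by
          refine tsum_congr fun t => ?_
          rw [lintegral_indicator_const (hMt t)]
      _ ≤ K := by
          rw [ENNReal.tsum_eq_iSup_sum]
          refine iSup_le fun s => ?_
          obtain ⟨T, hT⟩ := s.exists_nat_subset_range
          calc ∑ t ∈ s, R ^ t * μ {ω' | retTime Xp C ω' = ((t : ℕ) : ℕ∞)}
              ≤ ∑ t ∈ Finset.range (T + 1),
                  R ^ t * μ {ω' | retTime Xp C ω' = ((t : ℕ) : ℕ∞)} :=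
                Finset.sum_le_sum_of_subset
                  (hT.trans (Finset.range_subset_range.mpr (by omega)))
            _ = (∑ t ∈ Finset.range T,
                  R ^ (t + 1) * μ {ω' | retTime Xp C ω' = (((t + 1 : ℕ)) : ℕ∞)})
                + R ^ 0 * μ {ω' | retTime Xp C ω' = ((0 : ℕ) : ℕ∞)} :=
                Finset.sum_range_succ' _ T
            _ = ∑ t ∈ Finset.range T,
                  R ^ (t + 1) * μ {ω' | retTime Xp C ω' = (((t + 1 : ℕ)) : ℕ∞)} := by
                rw [hzero]
                simp
            _ ≤ ∑ t ∈ Finset.range T, R ^ (t + 1) * BB μ Xp V C k (t + 1) := by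
                refine Finset.sum_le_sum fun t _ => mul_le_mul_right ?_ _
                have hev : {ω' | retTime Xp C ω' = (((t + 1 : ℕ)) : ℕ∞)}
                    = {ω | (∀ n : ℕ, 1 ≤ n → n < t + 1 → Xp n ω ∉ C) ∧ Xp (t + 1) ω ∈ C} := by
                  ext ω
                  exact retTime_eq_coe Xp C ω (t + 1) (by omega)
                rw [hev]
                exact mu_ret_le_BB μ C V hV1 k Xp hstart t
            _ ≤ K := by
                cases T with
                | zero => simpa using (zero_le : (0:ℝ≥0∞) ≤ K)
                | succ T' =>
                    exact le_trans le_add_self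
                      (telescope μ P hP η b hη0 hb C V hV1 hVbdd hdrift k Xp hstart hchain T')
  have hKle : K ≤ ENNReal.ofReal (V k / η + b / (η * (1 - η)) * (1 / η)) := by
    have h1η : 0 < 1 - η := by linarith
    have hVk0 : (0 : ℝ) ≤ V k := zero_le_one.trans (hV1 k)
    have e1 : V k ≤ V k / η := by
      rw [le_div_iff₀ hη0]
      nlinarith
    have e2 : 1 / η * b ≤ b / (η * (1 - η)) * (1 / η) := by
      rw [div_mul_div_comm, mul_comm (1 / η) b, mul_one_div, div_le_div_iff₀ hη0 (by positivity)]
      nlinarith [mul_nonneg (mul_nonneg hb hη0.le) h1η.le,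
        mul_nonneg hb (pow_pos hη0 3).le]
    have hKeq : K = ENNReal.ofReal (V k + 1 / η * b) := by
      rw [hK, hR, ← ENNReal.ofReal_mul (by positivity),
        ← ENNReal.ofReal_add hVk0 (by positivity)]
    rw [hKeq]
    exact ENNReal.ofReal_le_ofReal (by linarith)
  refine ⟨hmain.trans hKle, 1 / η, ?_, ?_⟩
  · rw [lt_div_iff₀ hη0]
    linarith
  · exact lt_of_le_of_lt (hmain.trans hKle) ENNReal.ofReal_lt_top
end
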